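/- On the doubly infinite Sierpinski gasket graph SG, for n = 2^k the closed ball of radius n centered at the origin o has cardinality 3^{k+1} + 2. -/

import Mathlib

open Finset

attribute [local instance] Classical.propDecidable

namespace IDLA

noncomputable section

/-- Translate a set of points in the plane. -/
def trSet (a : ℝ × ℝ) (S : Set (ℝ × ℝ)) : Set (ℝ × ℝ) := (fun p => a + p) '' S

/-- Vertices of the level-`n` Sierpinski gasket graph. -/
def gasketV : ℕ → Set (ℝ × ℝ)
  | 0 => {(0, 0), (1, 0), (1 / 2, Real.sqrt 3 / 2)}
  | n + 1 =>
      gasketV n ∪ trSet ((2 : ℝ) ^ n, 0) (gasketV n) ∪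
        trSet ((2 : ℝ) ^ n / 2, (2 : ℝ) ^ n / 2 * Real.sqrt 3) (gasketV n)

/-- Edges of the level-`n` Sierpinski gasket graph. -/
def gasketE : ℕ → Set ((ℝ × ℝ) × (ℝ × ℝ))
  | 0 => {((0, 0), (1, 0)), ((0, 0), (1 / 2, Real.sqrt 3 / 2)),
      ((1, 0), (1 / 2, Real.sqrt 3 / 2))}
  | n + 1 =>
      gasketE n ∪
        (fun e => (((2 : ℝ) ^ n, 0) + e.1, ((2 : ℝ) ^ n, 0) + e.2)) '' gasketE n ∪
        (fun e => (((2 : ℝ) ^ n / 2, (2 : ℝ) ^ n / 2 * Real.sqrt 3) + e.1,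
          ((2 : ℝ) ^ n / 2, (2 : ℝ) ^ n / 2 * Real.sqrt 3) + e.2)) '' gasketE n

/-- Vertex set of the doubly infinite Sierpinski gasket graph. -/
def SGV : Set (ℝ × ℝ) := (⋃ n, gasketV n) ∪ (-(⋃ n, gasketV n))

/-- Edge set of the doubly infinite Sierpinski gasket graph. -/
def SGE : Set ((ℝ × ℝ) × (ℝ × ℝ)) :=
  (⋃ n, gasketE n) ∪ ((fun e => (-e.1, -e.2)) '' ⋃ n, gasketE n)

/-- The doubly infinite Sierpinski gasket graph `SG`. -/
def SGGraph : SimpleGraph SGV :=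
  SimpleGraph.fromRel fun x y => ((x : ℝ × ℝ), (y : ℝ × ℝ)) ∈ SGE

/-- The origin `o = (0,0)` of `SG`. -/
def oSG : SGV :=
  ⟨(0, 0), Or.inl (Set.mem_iUnion.mpr ⟨0, by simp [gasketV]⟩)⟩

end

noncomputable section
set_option linter.dupNamespace false

local notation "√3" => Real.sqrt 3

lemma s3_sq : √3 * √3 = 3 := Real.mul_self_sqrt (by norm_num)
lemma s3_pos : 0 < √3 := Real.sqrt_pos.mpr (by norm_num)

/-- Geometric bounds on the gasket vertices. -/
lemma gasketV_bounds : ∀ n, ∀ p ∈ gasketV n,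
    0 ≤ p.2 ∧ p.2 ≤ √3 * p.1 ∧ p.2 ≤ √3 * (2 ^ n - p.1) := by
  intro n
  induction n with
  | zero =>
    intro p hp
    have hs := s3_pos
    rcases hp with h | h | h <;> subst h <;>
      refine ⟨by positivity, ?_, ?_⟩ <;>
        first
        | (simp; nlinarith) | (simp only []; nlinarith) | simp
  | succ n ih =>
    intro p hp
    have hs := s3_pos.le
    have h2 : (0:ℝ) < 2 ^ n := by positivity
    have hpow : ((2:ℝ) ^ (n+1)) = 2 ^ n + 2 ^ n := by ring
    rcases hp with (hp | ⟨q, hq, rfl⟩) | ⟨q, hq, rfl⟩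
    · obtain ⟨h1, h2', h3⟩ := ih p hp
      exact ⟨h1, h2', by rw [hpow]; nlinarith⟩
    · obtain ⟨h1, h2', h3⟩ := ih q hq
      simp only [Prod.fst_add, Prod.snd_add, hpow]
      refine ⟨by simpa using h1, by nlinarith, by nlinarith⟩
    · obtain ⟨h1, h2', h3⟩ := ih q hq
      simp only [Prod.fst_add, Prod.snd_add, hpow]
      refine ⟨by nlinarith, by nlinarith, by nlinarith⟩

lemma gasketV_x_nonneg {n p} (hp : p ∈ gasketV n) : 0 ≤ p.1 := by
  obtain ⟨h1, h2, _⟩ := gasketV_bounds n p hp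
  nlinarith [s3_pos]

lemma gasketV_x_le {n p} (hp : p ∈ gasketV n) : p.1 ≤ 2 ^ n := by
  obtain ⟨h1, _, h3⟩ := gasketV_bounds n p hp
  nlinarith [s3_pos]

lemma gasketV_y_nonneg {n p} (hp : p ∈ gasketV n) : 0 ≤ p.2 :=
  (gasketV_bounds n p hp).1

lemma gasketV_y_le {n p} (hp : p ∈ gasketV n) : p.2 ≤ √3 * (2 ^ n / 2) := by
  obtain ⟨h1, h2, h3⟩ := gasketV_bounds n p hp
  nlinarith [s3_pos]
/-- Corner abbreviations. -/
lemma corner0_mem (n : ℕ) : ((0:ℝ), (0:ℝ)) ∈ gasketV n := by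
  induction n with
  | zero => simp [gasketV]
  | succ n ih => exact Or.inl (Or.inl ih)

lemma cornerR_mem (n : ℕ) : (((2:ℝ) ^ n, (0:ℝ))) ∈ gasketV n := by
  induction n with
  | zero => simp [gasketV]
  | succ n ih =>
    refine Or.inl (Or.inr ⟨((2:ℝ)^n, 0), ih, ?_⟩)
    simp [Prod.ext_iff]; ring

lemma cornerT_mem (n : ℕ) : (((2:ℝ) ^ n / 2, (2:ℝ) ^ n / 2 * √3)) ∈ gasketV n := by
  induction n with
  | zero => simp [gasketV]; ring
  | succ n ih =>
    refine Or.inr ⟨((2:ℝ)^n/2, (2:ℝ)^n/2 * √3), ih, ?_⟩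
    simp only [Prod.mk_add_mk, Prod.mk.injEq]
    constructor <;> ring

lemma gasketV_mono : Monotone gasketV := by
  apply monotone_nat_of_le_succ
  intro n p hp
  exact Or.inl (Or.inl hp)

lemma gasketE_mono : Monotone gasketE := by
  apply monotone_nat_of_le_succ
  intro n p hp
  exact Or.inl (Or.inl hp)

lemma mem_trSet {a p : ℝ × ℝ} {S : Set (ℝ × ℝ)} :
    p ∈ trSet a S ↔ ∃ q ∈ S, a + q = p := Set.mem_image _ _ _

/-- Intersection of the base copy with the right copy. -/
lemma base_inter_right {n : ℕ} {p : ℝ × ℝ} (h1 : p ∈ gasketV n)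
    (h2 : p ∈ trSet ((2:ℝ)^n, 0) (gasketV n)) : p = ((2:ℝ)^n, 0) := by
  obtain ⟨q, hq, rfl⟩ := h2
  have hx := gasketV_x_le h1
  have hx' := gasketV_x_nonneg hq
  have hy := gasketV_y_nonneg hq
  obtain ⟨_, _, h3⟩ := gasketV_bounds n _ h1
  simp only [Prod.fst_add, Prod.snd_add] at *
  have hq1 : q.1 = 0 := by linarith
  have hq2 : q.2 = 0 := by nlinarith [s3_pos]
  have : q = (0, 0) := Prod.ext hq1 hq2
  rw [this]; simp

/-- Intersection of the base copy with the top copy. -/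
lemma base_inter_top {n : ℕ} {p : ℝ × ℝ} (h1 : p ∈ gasketV n)
    (h2 : p ∈ trSet ((2:ℝ)^n/2, (2:ℝ)^n/2 * √3) (gasketV n)) :
    p = ((2:ℝ)^n/2, (2:ℝ)^n/2 * √3) := by
  obtain ⟨q, hq, rfl⟩ := h2
  have hy' := gasketV_y_nonneg hq
  have hyle := gasketV_y_le h1
  obtain ⟨_, hb2, hb3⟩ := gasketV_bounds n _ h1
  obtain ⟨_, hc2, hc3⟩ := gasketV_bounds n q hq
  simp only [Prod.fst_add, Prod.snd_add] at *
  have hs := s3_pos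
  have hq2 : q.2 = 0 := by nlinarith
  have hq1 : q.1 = 0 := by nlinarith
  have : q = (0, 0) := Prod.ext hq1 hq2
  rw [this]; simp

/-- Intersection of the right copy with the top copy. -/
lemma right_inter_top {n : ℕ} {p : ℝ × ℝ}
    (h1 : p ∈ trSet ((2:ℝ)^n, 0) (gasketV n))
    (h2 : p ∈ trSet ((2:ℝ)^n/2, (2:ℝ)^n/2 * √3) (gasketV n)) :
    p = ((2:ℝ)^n + 2^n/2, (2:ℝ)^n/2 * √3) := by
  obtain ⟨q, hq, rfl⟩ := h1
  obtain ⟨r, hr, hre⟩ := h2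
  obtain ⟨hb1, hb2, hb3⟩ := gasketV_bounds n q hq
  obtain ⟨hc1, hc2, hc3⟩ := gasketV_bounds n r hr
  have hs := s3_pos
  rw [Prod.ext_iff] at hre
  simp only [Prod.fst_add, Prod.snd_add] at *
  obtain ⟨he1, he2⟩ := hre
  have hq2 : q.2 = (2:ℝ)^n/2 * √3 := by nlinarith
  have hq1 : q.1 = (2:ℝ)^n/2 := by nlinarith
  have hP : q = ((2:ℝ)^n/2, (2:ℝ)^n/2 * √3) := Prod.ext hq1 hq2
  rw [hP]
  simp [Prod.ext_iff]
lemma gasketV_finite : ∀ n, (gasketV n).Finite := by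
  intro n
  induction n with
  | zero => exact (Set.finite_singleton _).insert _ |>.insert _
  | succ n ih => exact (ih.union (ih.image _)).union (ih.image _)

lemma trSet_ncard (a : ℝ × ℝ) (S : Set (ℝ × ℝ)) : (trSet a S).ncard = S.ncard :=
  Set.ncard_image_of_injective _ (add_right_injective a)

lemma two_mul_ncard_gasketV : ∀ n, 2 * (gasketV n).ncard = 3 ^ (n + 1) + 3 := by
  intro n
  induction n with
  | zero =>
    have h1 : ((0:ℝ),(0:ℝ)) ≠ ((1:ℝ),(0:ℝ)) := by
      intro h; have := congrArg Prod.fst h; norm_num at this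
    have h2 : ((0:ℝ),(0:ℝ)) ≠ ((1/2:ℝ), √3/2) := by
      intro h; have := congrArg Prod.fst h; norm_num at this
    have h3 : ((1:ℝ),(0:ℝ)) ≠ ((1/2:ℝ), √3/2) := by
      intro h; have := congrArg Prod.fst h; norm_num at this
    have : (gasketV 0).ncard = 3 := by
      show ({((0:ℝ),(0:ℝ)), ((1:ℝ),(0:ℝ)), ((1/2:ℝ), √3/2)} : Set (ℝ×ℝ)).ncard = 3
      rw [Set.ncard_insert_of_notMem (by
          simp only [Set.mem_insert_iff, Set.mem_singleton_iff]
          push_neg; exact ⟨h1, h2⟩)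
        ((Set.finite_singleton _).insert _), Set.ncard_pair h3]
    rw [this]; norm_num
  | succ n ih =>
    set A := gasketV n with hA
    set B := trSet ((2:ℝ)^n, 0) (gasketV n) with hB
    set C := trSet ((2:ℝ)^n/2, (2:ℝ)^n/2 * √3) (gasketV n) with hC
    have hAf := gasketV_finite n
    have hBf : B.Finite := hAf.image _
    have hCf : C.Finite := hAf.image _
    have hpos : (0:ℝ) < 2^n := by positivity
    have hAB : A ∩ B = {((2:ℝ)^n, 0)} := by
      apply Set.Subset.antisymm
      · rintro p ⟨hp1, hp2⟩
        exact base_inter_right hp1 hp2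
      · rintro p rfl
        exact ⟨cornerR_mem n, ⟨(0,0), corner0_mem n, by simp⟩⟩
    have hABC : (A ∪ B) ∩ C =
        {((2:ℝ)^n/2, (2:ℝ)^n/2 * √3), ((2:ℝ)^n + 2^n/2, (2:ℝ)^n/2 * √3)} := by
      apply Set.Subset.antisymm
      · rintro p ⟨hp1 | hp1, hp2⟩
        · exact Or.inl (base_inter_top hp1 hp2)
        · exact Or.inr (right_inter_top hp1 hp2)
      · rintro p (rfl | rfl)
        · exact ⟨Or.inl (cornerT_mem n), ⟨(0,0), corner0_mem n, by simp⟩⟩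
        · refine ⟨Or.inr ⟨((2:ℝ)^n/2, (2:ℝ)^n/2 * √3), cornerT_mem n, by simp⟩,
            ⟨((2:ℝ)^n, 0), cornerR_mem n, ?_⟩⟩
          simp only [Prod.mk_add_mk, Prod.mk.injEq]
          constructor <;> ring
    have e1 : (A ∪ B).ncard + (A ∩ B).ncard = A.ncard + B.ncard :=
      Set.ncard_union_add_ncard_inter A B hAf hBf
    have e2 : ((A ∪ B) ∪ C).ncard + ((A ∪ B) ∩ C).ncard = (A ∪ B).ncard + C.ncard :=
      Set.ncard_union_add_ncard_inter _ C (hAf.union hBf) hCf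
    have eB : B.ncard = A.ncard := trSet_ncard _ _
    have eC : C.ncard = A.ncard := trSet_ncard _ _
    have eAB : (A ∩ B).ncard = 1 := by rw [hAB, Set.ncard_singleton]
    have eABC : ((A ∪ B) ∩ C).ncard = 2 := by
      rw [hABC]
      refine Set.ncard_pair ?_
      intro h
      have h2 : (2:ℝ)^n/2 = 2^n + 2^n/2 := congrArg Prod.fst h
      linarith
    have hV : gasketV (n+1) = (A ∪ B) ∪ C := rfl
    have hpow : (3:ℕ) ^ (n + 1 + 1) = 3 * 3 ^ (n + 1) := by ring
    rw [hV]
    omega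
lemma gasketV_subset_SGV {n : ℕ} : gasketV n ⊆ SGV :=
  fun _ hp => Or.inl (Set.mem_iUnion.mpr ⟨n, hp⟩)

lemma neg_mem_SGV {p : ℝ × ℝ} (hp : p ∈ SGV) : -p ∈ SGV := by
  rcases hp with h | h
  · exact Or.inr (by simpa using h)
  · exact Or.inl (by simpa using h)

lemma gasketE_endpoints : ∀ n, ∀ e ∈ gasketE n, e.1 ∈ gasketV n ∧ e.2 ∈ gasketV n := by
  intro n
  induction n with
  | zero =>
    rintro e (rfl | rfl | rfl) <;> constructor <;> simp [gasketV]
  | succ n ih =>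
    rintro e ((he | ⟨u, hu, rfl⟩) | ⟨u, hu, rfl⟩)
    · exact ⟨Or.inl (Or.inl (ih e he).1), Or.inl (Or.inl (ih e he).2)⟩
    · exact ⟨Or.inl (Or.inr ⟨u.1, (ih u hu).1, rfl⟩), Or.inl (Or.inr ⟨u.2, (ih u hu).2, rfl⟩)⟩
    · exact ⟨Or.inr ⟨u.1, (ih u hu).1, rfl⟩, Or.inr ⟨u.2, (ih u hu).2, rfl⟩⟩

lemma gasketE_diff : ∀ n, ∀ e ∈ gasketE n,
    (e.2.1 - e.1.1, e.2.2 - e.1.2) ∈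
      ({((1:ℝ),(0:ℝ)), ((1/2:ℝ), √3/2), ((-1/2:ℝ), √3/2)} : Set (ℝ × ℝ)) := by
  intro n
  induction n with
  | zero =>
    rintro e (rfl | rfl | rfl)
    · left; norm_num
    · right; left; norm_num
    · right; right; norm_num
  | succ n ih =>
    rintro e ((he | ⟨u, hu, rfl⟩) | ⟨u, hu, rfl⟩)
    · exact ih e he
    · simpa using ih u hu
    · simpa using ih u hu

/-- The 1-Lipschitz linear functionals. -/
def F (ε : ℝ) (p : ℝ × ℝ) : ℝ := p.1 + ε * p.2 * √3 / 3

lemma gasketE_lip {ε : ℝ} (hε : |ε| ≤ 1) {n : ℕ} {e : (ℝ × ℝ) × (ℝ × ℝ)}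
    (he : e ∈ gasketE n) : |F ε e.1 - F ε e.2| ≤ 1 := by
  have hd := gasketE_diff n e he
  rw [abs_le] at hε
  have hs := s3_sq
  rcases hd with hd | hd | hd
  · have h1 : e.2.1 - e.1.1 = (1:ℝ) := congrArg Prod.fst hd
    have h2 : e.2.2 - e.1.2 = (0:ℝ) := congrArg Prod.snd hd
    have key : F ε e.1 - F ε e.2 = -1 := by
      simp only [F]
      have a1 : e.2.1 = e.1.1 + 1 := by linarith
      have a2 : e.2.2 = e.1.2 := by linarith
      rw [a1, a2]; ring
    rw [key]; norm_num
  · have h1 : e.2.1 - e.1.1 = (1/2:ℝ) := congrArg Prod.fst hd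
    have h2 : e.2.2 - e.1.2 = √3/2 := congrArg Prod.snd hd
    have key : F ε e.1 - F ε e.2 = -1/2 - ε/2 := by
      simp only [F]
      have a1 : e.2.1 = e.1.1 + 1/2 := by linarith
      have a2 : e.2.2 = e.1.2 + √3/2 := by linarith
      rw [a1, a2]; linear_combination (-ε/6) * hs
    rw [key, abs_le]; constructor <;> linarith [hε.1, hε.2]
  · rw [Set.mem_singleton_iff] at hd
    have h1 : e.2.1 - e.1.1 = (-1/2:ℝ) := congrArg Prod.fst hd
    have h2 : e.2.2 - e.1.2 = √3/2 := congrArg Prod.snd hd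
    have key : F ε e.1 - F ε e.2 = 1/2 - ε/2 := by
      simp only [F]
      have a1 : e.2.1 = e.1.1 - 1/2 := by linarith
      have a2 : e.2.2 = e.1.2 + √3/2 := by linarith
      rw [a1, a2]; linear_combination (-ε/6) * hs
    rw [key, abs_le]; constructor <;> linarith [hε.1, hε.2]

lemma F_neg (ε : ℝ) (p : ℝ × ℝ) : F ε (-p) = -F ε p := by
  simp only [F, Prod.fst_neg, Prod.snd_neg]; ring

lemma SGE_lip {ε : ℝ} (hε : |ε| ≤ 1) {p q : ℝ × ℝ} (h : (p, q) ∈ SGE) :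
    |F ε p - F ε q| ≤ 1 := by
  rcases h with h | ⟨u, hu, he⟩
  · obtain ⟨n, hn⟩ := Set.mem_iUnion.mp h
    exact gasketE_lip hε hn
  · obtain ⟨n, hn⟩ := Set.mem_iUnion.mp hu
    have h1 : p = -u.1 := (congrArg Prod.fst he).symm
    have h2 : q = -u.2 := (congrArg Prod.snd he).symm
    rw [h1, h2, F_neg, F_neg]
    have : -F ε u.1 - -F ε u.2 = -(F ε u.1 - F ε u.2) := by ring
    rw [this, abs_neg]
    exact gasketE_lip hε hn

lemma adj_lip {ε : ℝ} (hε : |ε| ≤ 1) {x y : SGV} (h : SGGraph.Adj x y) :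
    |F ε x.val - F ε y.val| ≤ 1 := by
  rw [SGGraph, SimpleGraph.fromRel_adj] at h
  rcases h.2 with h2 | h2
  · exact SGE_lip hε h2
  · rw [abs_sub_comm]; exact SGE_lip hε h2

lemma walk_lip {ε : ℝ} (hε : |ε| ≤ 1) {x y : SGV} (w : SGGraph.Walk x y) :
    |F ε x.val - F ε y.val| ≤ (w.length : ℝ) := by
  induction w with
  | nil => simp
  | @cons a b c h w ih =>
    have h1 := adj_lip hε h
    have h2 : |F ε a.val - F ε c.val| ≤ |F ε a.val - F ε b.val| + |F ε b.val - F ε c.val| :=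
      abs_sub_le _ _ _
    simp only [SimpleGraph.Walk.length_cons]
    push_cast
    linarith
/-- Bounded-length walk predicate. -/
def WB (x y : SGV) (n : ℕ) : Prop := ∃ w : SGGraph.Walk x y, w.length ≤ n

lemma WB_refl {x : SGV} {n : ℕ} : WB x x n := ⟨SimpleGraph.Walk.nil, by simp⟩

lemma WB_mono {x y : SGV} {m n : ℕ} (h : WB x y m) (hmn : m ≤ n) : WB x y n :=
  ⟨h.choose, le_trans h.choose_spec hmn⟩

lemma WB_trans {x y z : SGV} {m n : ℕ} (h1 : WB x y m) (h2 : WB y z n) : WB x z (m + n) := by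
  obtain ⟨w1, hw1⟩ := h1
  obtain ⟨w2, hw2⟩ := h2
  exact ⟨w1.append w2, by rw [SimpleGraph.Walk.length_append]; omega⟩

lemma WB_symm {x y : SGV} {n : ℕ} (h : WB x y n) : WB y x n := by
  obtain ⟨w, hw⟩ := h
  exact ⟨w.reverse, by rwa [SimpleGraph.Walk.length_reverse]⟩

lemma WB_congr {n : ℕ} {v w v' w' : ℝ × ℝ} {h1 : v ∈ SGV} {h2 : w ∈ SGV}
    {h1' : v' ∈ SGV} {h2' : w' ∈ SGV} (h : WB ⟨v, h1⟩ ⟨w, h2⟩ n)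
    (hv : v = v') (hw : w = w') : WB ⟨v', h1'⟩ ⟨w', h2'⟩ n := by
  subst hv; subst hw; exact h

lemma WB_of_eq {x y : SGV} {n : ℕ} (h : x.val = y.val) : WB x y n := by
  obtain rfl : x = y := Subtype.ext h
  exact WB_refl

lemma WB_step {x y : SGV} (h : (x.val, y.val) ∈ SGE) (hne : x.val ≠ y.val) : WB x y 1 := by
  have hadj : SGGraph.Adj x y := by
    rw [SGGraph, SimpleGraph.fromRel_adj]
    exact ⟨fun hh => hne (congrArg Subtype.val hh), Or.inl h⟩
  exact ⟨SimpleGraph.Walk.cons hadj SimpleGraph.Walk.nil, by simp⟩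

lemma WB_glue {k : ℕ} {x y : SGV} {v w : ℝ × ℝ} {hv1 : v ∈ SGV} {hv2 : w ∈ SGV}
    (h1 : WB x ⟨v, hv1⟩ k) (h2 : WB ⟨w, hv2⟩ y k)
    (hm : v = w) : WB x y (k + k) := by
  subst hm; exact WB_trans h1 h2

lemma add_pair (a : ℝ × ℝ) (x y : ℝ) : a + (x, y) = (a.1 + x, a.2 + y) := rfl

/-- The corner vertices of the level-`n` gasket. -/
def corners (n : ℕ) : Set (ℝ × ℝ) :=
  {(0, 0), ((2:ℝ) ^ n, 0), ((2:ℝ) ^ n / 2, (2:ℝ) ^ n / 2 * √3)}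

lemma corners_sub {n : ℕ} {c : ℝ × ℝ} (hc : c ∈ corners n) : c ∈ gasketV n := by
  rcases hc with rfl | rfl | rfl
  · exact corner0_mem n
  · exact cornerR_mem n
  · exact cornerT_mem n

lemma key : ∀ (n : ℕ) (a : ℝ × ℝ)
    (hv : ∀ p ∈ gasketV n, a + p ∈ SGV)
    (he : ∀ e ∈ gasketE n, (a + e.1, a + e.2) ∈ SGE),
    ∀ p, (hp : p ∈ gasketV n) → ∀ c, (hc : c ∈ corners n) →
    WB ⟨a + p, hv p hp⟩ ⟨a + c, hv c (corners_sub hc)⟩ (2 ^ n) := by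
  intro n
  induction n with
  | zero =>
    intro a hv he p hp c hc
    have e1 : (((0:ℝ),(0:ℝ)), ((1:ℝ),(0:ℝ))) ∈ gasketE 0 := Or.inl rfl
    have e2 : (((0:ℝ),(0:ℝ)), ((1/2:ℝ), √3/2)) ∈ gasketE 0 := Or.inr (Or.inl rfl)
    have e3 : (((1:ℝ),(0:ℝ)), ((1/2:ℝ), √3/2)) ∈ gasketE 0 := Or.inr (Or.inr rfl)
    have d12 : ((0:ℝ),(0:ℝ)) ≠ ((1:ℝ),(0:ℝ)) := by
      intro h; have := congrArg Prod.fst h; norm_num at this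
    have d13 : ((0:ℝ),(0:ℝ)) ≠ ((1/2:ℝ), √3/2) := by
      intro h; have := congrArg Prod.fst h; norm_num at this
    have d23 : ((1:ℝ),(0:ℝ)) ≠ ((1/2:ℝ), √3/2) := by
      intro h; have := congrArg Prod.fst h; norm_num at this
    have hcg : c ∈ gasketV 0 := corners_sub hc
    have hB : ((2:ℝ)^0, (0:ℝ)) = ((1:ℝ), (0:ℝ)) := by norm_num
    have hC : ((2:ℝ)^0/2, (2:ℝ)^0/2 * √3) = ((1/2:ℝ), √3/2) := by
      rw [Prod.ext_iff]; norm_num; ring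
    have h1 : (2:ℕ)^0 = 1 := rfl
    rw [h1]
    have step : ∀ (u v : ℝ × ℝ), ((u, v) ∈ gasketE 0 ∨ (v, u) ∈ gasketE 0) → u ≠ v →
        ∀ (hu : a + u ∈ SGV) (hv' : a + v ∈ SGV), WB ⟨a + u, hu⟩ ⟨a + v, hv'⟩ 1 := by
      rintro u v (hE | hE) hne hu hv'
      · refine WB_step (he _ hE) ?_
        intro hh
        exact hne (add_left_cancel (show a + u = a + v from hh))
      · refine WB_symm (WB_step (he _ hE) ?_)
        intro hh
        exact hne (add_left_cancel (show a + v = a + u from hh)).symm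
    rcases hp with rfl | rfl | rfl <;> rcases hcg with hcg | hcg | hcg
    · exact WB_of_eq (show a + ((0:ℝ),(0:ℝ)) = a + c by rw [hcg])
    · exact WB_congr (step _ _ (Or.inl e1) d12 (hv _ (by simp [gasketV]))
        (hv _ (by simp [gasketV]))) rfl (by rw [hcg])
    · exact WB_congr (step _ _ (Or.inl e2) d13 (hv _ (by simp [gasketV]))
        (hv _ (by simp [gasketV]))) rfl (by rw [hcg])
    · exact WB_congr (step _ _ (Or.inr e1) d12.symm (hv _ (by simp [gasketV]))
        (hv _ (by simp [gasketV]))) rfl (by rw [hcg])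
    · exact WB_of_eq (show a + ((1:ℝ),(0:ℝ)) = a + c by rw [hcg])
    · exact WB_congr (step _ _ (Or.inl e3) d23 (hv _ (by simp [gasketV]))
        (hv _ (by simp [gasketV]))) rfl (by rw [hcg])
    · exact WB_congr (step _ _ (Or.inr e2) d13.symm (hv _ (by simp [gasketV]))
        (hv _ (by simp [gasketV]))) rfl (by rw [hcg])
    · exact WB_congr (step _ _ (Or.inr e3) d23.symm (hv _ (by simp [gasketV]))
        (hv _ (by simp [gasketV]))) rfl (by rw [hcg])
    · exact WB_of_eq (show a + ((1/2:ℝ), √3/2) = a + c by rw [hcg])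
  | succ n ih =>
    intro a hv he p hp c hc
    have hv0 : ∀ q ∈ gasketV n, a + q ∈ SGV := fun q hq => hv q (Or.inl (Or.inl hq))
    have he0 : ∀ e ∈ gasketE n, (a + e.1, a + e.2) ∈ SGE :=
      fun e heq => he e (Or.inl (Or.inl heq))
    have hv1 : ∀ q ∈ gasketV n, (a + ((2:ℝ)^n, 0)) + q ∈ SGV := fun q hq => by
      rw [add_assoc]; exact hv _ (Or.inl (Or.inr ⟨q, hq, rfl⟩))
    have he1 : ∀ e ∈ gasketE n,
        ((a + ((2:ℝ)^n, 0)) + e.1, (a + ((2:ℝ)^n, 0)) + e.2) ∈ SGE := fun e heq => by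
      rw [add_assoc, add_assoc]; exact he _ (Or.inl (Or.inr ⟨e, heq, rfl⟩))
    have hv2 : ∀ q ∈ gasketV n, (a + ((2:ℝ)^n/2, (2:ℝ)^n/2 * √3)) + q ∈ SGV := fun q hq => by
      rw [add_assoc]; exact hv _ (Or.inr ⟨q, hq, rfl⟩)
    have he2 : ∀ e ∈ gasketE n,
        ((a + ((2:ℝ)^n/2, (2:ℝ)^n/2 * √3)) + e.1,
         (a + ((2:ℝ)^n/2, (2:ℝ)^n/2 * √3)) + e.2) ∈ SGE := fun e heq => by
      rw [add_assoc, add_assoc]; exact he _ (Or.inr ⟨e, heq, rfl⟩)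
    have IH0 := ih a hv0 he0
    have IH1 := ih (a + ((2:ℝ)^n, 0)) hv1 he1
    have IH2 := ih (a + ((2:ℝ)^n/2, (2:ℝ)^n/2 * √3)) hv2 he2
    have hc0 : ((0:ℝ),(0:ℝ)) ∈ corners n := Or.inl rfl
    have hcR : (((2:ℝ)^n, 0)) ∈ corners n := Or.inr (Or.inl rfl)
    have hcT : (((2:ℝ)^n/2, (2:ℝ)^n/2 * √3)) ∈ corners n := Or.inr (Or.inr rfl)
    have hpow : (2:ℕ)^n + 2^n = 2^(n+1) := by rw [pow_succ]; ring
    have hle : (2:ℕ)^n ≤ 2^(n+1) := by rw [pow_succ]; omega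
    -- the various coincidence equalities
    have E01 : a + ((2:ℝ)^n, 0) + (0, 0) = a + ((2:ℝ)^n, 0) := by
      rw [show ((0:ℝ),(0:ℝ)) = (0 : ℝ × ℝ) from rfl, add_zero]
    have E02 : a + ((2:ℝ)^n/2, (2:ℝ)^n/2 * √3) + (0, 0)
        = a + ((2:ℝ)^n/2, (2:ℝ)^n/2 * √3) := by
      rw [show ((0:ℝ),(0:ℝ)) = (0 : ℝ × ℝ) from rfl, add_zero]
    have E12 : a + ((2:ℝ)^n, 0) + ((2:ℝ)^n/2, (2:ℝ)^n/2 * √3)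
        = a + ((2:ℝ)^n/2, (2:ℝ)^n/2 * √3) + ((2:ℝ)^n, 0) := by
      simp only [add_pair, Prod.mk.injEq]
      constructor <;> ring
    have EbigR : a + ((2:ℝ)^n, 0) + ((2:ℝ)^n, 0) = a + ((2:ℝ)^(n+1), 0) := by
      simp only [add_pair, Prod.mk.injEq]
      constructor <;> ring
    have EbigT : a + ((2:ℝ)^n/2, (2:ℝ)^n/2 * √3) + ((2:ℝ)^n/2, (2:ℝ)^n/2 * √3)
        = a + ((2:ℝ)^(n+1)/2, (2:ℝ)^(n+1)/2 * √3) := by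
      simp only [add_pair, Prod.mk.injEq]
      constructor <;> ring
    rcases hp with (hp | ⟨q, hq, rfl⟩) | ⟨q, hq, rfl⟩ <;> rcases hc with rfl | rfl | rfl
    -- copy 0
    · exact WB_mono (IH0 p hp (0,0) hc0) hle
    · exact WB_congr (WB_mono (WB_glue (IH0 p hp _ hcR)
        (IH1 (0,0) (corner0_mem n) _ hcR) E01.symm) (le_of_eq hpow)) rfl EbigR
    · exact WB_congr (WB_mono (WB_glue (IH0 p hp _ hcT)
        (IH2 (0,0) (corner0_mem n) _ hcT) E02.symm) (le_of_eq hpow)) rfl EbigT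
    -- copy 1 (right)
    · exact WB_congr (WB_mono (WB_glue (IH1 q hq (0,0) hc0)
        (IH0 _ (cornerR_mem n) (0,0) hc0) E01) (le_of_eq hpow)) (add_assoc a _ q) rfl
    · exact WB_congr (WB_mono (IH1 q hq _ hcR) hle) (add_assoc a _ q) EbigR
    · exact WB_congr (WB_mono (WB_glue (IH1 q hq _ hcT)
        (IH2 _ (cornerR_mem n) _ hcT) E12) (le_of_eq hpow)) (add_assoc a _ q) EbigT
    -- copy 2 (top)
    · exact WB_congr (WB_mono (WB_glue (IH2 q hq (0,0) hc0)
        (IH0 _ (cornerT_mem n) (0,0) hc0) E02) (le_of_eq hpow)) (add_assoc a _ q) rfl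
    · exact WB_congr (WB_mono (WB_glue (IH2 q hq _ hcR)
        (IH1 _ (cornerT_mem n) _ hcR) E12.symm) (le_of_eq hpow)) (add_assoc a _ q) EbigR
    · exact WB_congr (WB_mono (IH2 q hq _ hcT) hle) (add_assoc a _ q) EbigT
lemma negSGE {p q : ℝ × ℝ} (h : (p, q) ∈ SGE) : (-p, -q) ∈ SGE := by
  rcases h with h | ⟨u, hu, he⟩
  · exact Or.inr ⟨(p, q), h, rfl⟩
  · have h1 : p = -u.1 := (congrArg Prod.fst he).symm
    have h2 : q = -u.2 := (congrArg Prod.snd he).symm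
    rw [h1, h2, neg_neg, neg_neg]
    exact Or.inl hu

/-- Negation as a graph homomorphism. -/
def negHom : SGGraph →g SGGraph where
  toFun x := ⟨-x.val, neg_mem_SGV x.2⟩
  map_rel' := by
    intro x y h
    rw [SGGraph, SimpleGraph.fromRel_adj] at h ⊢
    refine ⟨fun hh => h.1 (Subtype.ext ?_), ?_⟩
    · have : -x.val = -y.val := congrArg Subtype.val hh
      exact neg_injective this
    · rcases h.2 with h2 | h2
      · exact Or.inl (negSGE h2)
      · exact Or.inr (negSGE h2)

lemma WB_neg {x y : SGV} {n : ℕ} (h : WB x y n) :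
    WB ⟨-x.val, neg_mem_SGV x.2⟩ ⟨-y.val, neg_mem_SGV y.2⟩ n := by
  obtain ⟨w, hw⟩ := h
  exact ⟨w.map negHom, by exact (SimpleGraph.Walk.length_map negHom w).trans_le hw⟩

lemma WB_le_o {n : ℕ} {p : ℝ × ℝ} (hp : p ∈ gasketV n) (h : p ∈ SGV) :
    WB oSG ⟨p, h⟩ (2 ^ n) := by
  have hv : ∀ q ∈ gasketV n, (0 : ℝ × ℝ) + q ∈ SGV := fun q hq => by
    rw [zero_add]; exact gasketV_subset_SGV hq
  have he : ∀ e ∈ gasketE n, ((0 : ℝ × ℝ) + e.1, (0 : ℝ × ℝ) + e.2) ∈ SGE := fun e he' => by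
    rw [zero_add, zero_add]; exact Or.inl (Set.mem_iUnion.mpr ⟨n, he'⟩)
  have hkey := key n 0 hv he p hp (0, 0) (Or.inl rfl)
  exact WB_symm (WB_congr hkey (zero_add p)
    (show (0 : ℝ × ℝ) + (0, 0) = ((0:ℝ), (0:ℝ)) from zero_add _))

lemma WB_le_o_neg {n : ℕ} {p : ℝ × ℝ} (hp : -p ∈ gasketV n) (h : p ∈ SGV) :
    WB oSG ⟨p, h⟩ (2 ^ n) := by
  have h1 : (-p : ℝ × ℝ) ∈ SGV := gasketV_subset_SGV hp
  have h2 := WB_neg (WB_le_o hp h1)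
  refine WB_congr h2 ?_ (neg_neg p)
  show -((0:ℝ), (0:ℝ)) = ((0:ℝ), (0:ℝ))
  norm_num [Prod.ext_iff]

lemma exists_WB (y : SGV) : ∃ n, WB oSG y (2 ^ n) := by
  rcases y with ⟨p, hp⟩
  rcases hp with h | h
  · obtain ⟨n, hn⟩ := Set.mem_iUnion.mp h
    exact ⟨n, WB_le_o hn _⟩
  · have : -p ∈ ⋃ n, gasketV n := by simpa using h
    obtain ⟨n, hn⟩ := Set.mem_iUnion.mp this
    exact ⟨n, WB_le_o_neg hn _⟩

lemma reachable_o (y : SGV) : SGGraph.Reachable oSG y := by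
  obtain ⟨n, w, _⟩ := exists_WB y
  exact ⟨w⟩
lemma pos_neg_inter {n k : ℕ} {p : ℝ × ℝ} (h1 : p ∈ gasketV n) (h2 : -p ∈ gasketV k) :
    p = 0 := by
  have a1 := gasketV_x_nonneg h1
  have a2 := gasketV_x_nonneg h2
  have b1 := gasketV_y_nonneg h1
  have b2 := gasketV_y_nonneg h2
  simp only [Prod.fst_neg, Prod.snd_neg] at a2 b2
  have : p.1 = 0 := by linarith
  have : p.2 = 0 := by linarith
  exact Prod.ext ‹p.1 = 0› ‹p.2 = 0›

lemma cut_pos (k : ℕ) : ∀ m, ∀ p q : ℝ × ℝ,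
    ((p, q) ∈ gasketE (k + m) ∨ (q, p) ∈ gasketE (k + m)) →
    p ∈ gasketV k → q ∉ gasketV k →
    p = ((2:ℝ)^k, 0) ∨ p = ((2:ℝ)^k/2, (2:ℝ)^k/2 * √3) := by
  intro m
  induction m with
  | zero =>
    intro p q hpq hp hq
    exfalso
    rcases hpq with h | h
    · exact hq (gasketE_endpoints (k+0) _ h).2
    · exact hq (gasketE_endpoints (k+0) _ h).1
  | succ m ih =>
    intro p q hpq hp hq
    have hPV : p ∈ gasketV (k+m) := gasketV_mono (Nat.le_add_right k m) hp
    have hmain : ∀ u : (ℝ × ℝ) × (ℝ × ℝ), u ∈ gasketE (k+m) →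
        (p = ((2:ℝ)^(k+m), 0) + u.1 ∨ p = ((2:ℝ)^(k+m), 0) + u.2) ∨
        (p = ((2:ℝ)^(k+m)/2, (2:ℝ)^(k+m)/2 * √3) + u.1 ∨
         p = ((2:ℝ)^(k+m)/2, (2:ℝ)^(k+m)/2 * √3) + u.2) →
        p = ((2:ℝ)^k, 0) ∨ p = ((2:ℝ)^k/2, (2:ℝ)^k/2 * √3) := by
      intro u hu hcase
      have hends := gasketE_endpoints (k+m) u hu
      rcases hcase with hcase | hcase
      · have hptr : p ∈ trSet ((2:ℝ)^(k+m), 0) (gasketV (k+m)) := by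
          rcases hcase with rfl | rfl
          · exact ⟨u.1, hends.1, rfl⟩
          · exact ⟨u.2, hends.2, rfl⟩
        have hp_eq := base_inter_right hPV hptr
        have hx := gasketV_x_le hp
        rw [hp_eq] at hx
        simp only at hx
        have hkm : k + m ≤ k := by
          have h2 : (1:ℝ) < 2 := by norm_num
          exact (pow_le_pow_iff_right₀ h2).mp hx
        have hm0 : m = 0 := by omega
        subst hm0
        exact Or.inl hp_eq
      · have hptr : p ∈ trSet ((2:ℝ)^(k+m)/2, (2:ℝ)^(k+m)/2 * √3) (gasketV (k+m)) := by
          rcases hcase with rfl | rfl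
          · exact ⟨u.1, hends.1, rfl⟩
          · exact ⟨u.2, hends.2, rfl⟩
        have hp_eq := base_inter_top hPV hptr
        have hy := gasketV_y_le hp
        rw [hp_eq] at hy
        simp only at hy
        have hxle : (2:ℝ)^(k+m) ≤ 2^k := by nlinarith [s3_pos]
        have hkm : k + m ≤ k := by
          have h2 : (1:ℝ) < 2 := by norm_num
          exact (pow_le_pow_iff_right₀ h2).mp hxle
        have hm0 : m = 0 := by omega
        subst hm0
        exact Or.inr hp_eq
    have hpq' : ((p, q) ∈ gasketE ((k+m)+1) ∨ (q, p) ∈ gasketE ((k+m)+1)) := hpq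
    rcases hpq' with ((h | ⟨u, hu, he⟩) | ⟨u, hu, he⟩) | ((h | ⟨u, hu, he⟩) | ⟨u, hu, he⟩)
    · exact ih p q (Or.inl h) hp hq
    · exact hmain u hu (Or.inl (Or.inl (congrArg Prod.fst he).symm))
    · exact hmain u hu (Or.inr (Or.inl (congrArg Prod.fst he).symm))
    · exact ih p q (Or.inr h) hp hq
    · exact hmain u hu (Or.inl (Or.inr (congrArg Prod.snd he).symm))
    · exact hmain u hu (Or.inr (Or.inr (congrArg Prod.snd he).symm))

/-- The ball of radius `2^k`, as a set of points. -/
def Sset (k : ℕ) : Set (ℝ × ℝ) := gasketV k ∪ -(gasketV k)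

/-- The four corner points on the boundary of the ball. -/
def C4 (k : ℕ) : Set (ℝ × ℝ) :=
  {((2:ℝ)^k, 0), ((2:ℝ)^k/2, (2:ℝ)^k/2 * √3),
   (-((2:ℝ)^k), 0), (-((2:ℝ)^k/2), -((2:ℝ)^k/2 * √3))}

lemma cut {k : ℕ} {p q : ℝ × ℝ} (hpq : (p, q) ∈ SGE ∨ (q, p) ∈ SGE)
    (hp : p ∈ Sset k) (hq : q ∉ Sset k) : p ∈ C4 k := by
  have hq1 : q ∉ gasketV k := fun h => hq (Or.inl h)
  have hq2 : ¬(-q ∈ gasketV k) := fun h => hq (Or.inr (by simpa using h))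
  -- reduce to an edge of some gasketE n, possibly negated
  have hmain : ∀ n, ((p, q) ∈ gasketE n ∨ (q, p) ∈ gasketE n) →
      p = ((2:ℝ)^k, 0) ∨ p = ((2:ℝ)^k/2, (2:ℝ)^k/2 * √3) := by
    intro n hedge
    have hpn : p ∈ gasketV n := by
      rcases hedge with h | h
      · exact (gasketE_endpoints n _ h).1
      · exact (gasketE_endpoints n _ h).2
    have hpk : p ∈ gasketV k := by
      rcases hp with h | h
      · exact h
      · have : -p ∈ gasketV k := by simpa using h
        have hp0 : p = 0 := pos_neg_inter hpn this
        rw [hp0]; exact corner0_mem k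
    rcases le_or_gt n k with hnk | hnk
    · -- lift the edge to level k
      have : ((p, q) ∈ gasketE (k + 0) ∨ (q, p) ∈ gasketE (k + 0)) := by
        rcases hedge with h | h
        · exact Or.inl (gasketE_mono (by omega : n ≤ k + 0) h)
        · exact Or.inr (gasketE_mono (by omega : n ≤ k + 0) h)
      exact cut_pos k 0 p q this hpk hq1
    · have heq : k + (n - k) = n := by omega
      have : ((p, q) ∈ gasketE (k + (n - k)) ∨ (q, p) ∈ gasketE (k + (n - k))) := by
        rw [heq]; exact hedge
      exact cut_pos k (n - k) p q this hpk hq1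
  have hmainneg : ∀ n, ((-p, -q) ∈ gasketE n ∨ (-q, -p) ∈ gasketE n) →
      -p = ((2:ℝ)^k, 0) ∨ -p = ((2:ℝ)^k/2, (2:ℝ)^k/2 * √3) := by
    intro n hedge
    have hpn : -p ∈ gasketV n := by
      rcases hedge with h | h
      · exact (gasketE_endpoints n _ h).1
      · exact (gasketE_endpoints n _ h).2
    have hpk : -p ∈ gasketV k := by
      rcases hp with h | h
      · have hp0 : p = 0 := pos_neg_inter h hpn
        rw [hp0, neg_zero]; exact corner0_mem k
      · simpa using h
    rcases le_or_gt n k with hnk | hnk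
    · have : ((-p, -q) ∈ gasketE (k + 0) ∨ (-q, -p) ∈ gasketE (k + 0)) := by
        rcases hedge with h | h
        · exact Or.inl (gasketE_mono (by omega : n ≤ k + 0) h)
        · exact Or.inr (gasketE_mono (by omega : n ≤ k + 0) h)
      exact cut_pos k 0 (-p) (-q) this hpk hq2
    · have heq : k + (n - k) = n := by omega
      have : ((-p, -q) ∈ gasketE (k + (n - k)) ∨ (-q, -p) ∈ gasketE (k + (n - k))) := by
        rw [heq]; exact hedge
      exact cut_pos k (n - k) (-p) (-q) this hpk hq2
  rcases hpq with (h | ⟨u, hu, he⟩) | (h | ⟨u, hu, he⟩)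
  · obtain ⟨n, hn⟩ := Set.mem_iUnion.mp h
    rcases hmain n (Or.inl hn) with h' | h'
    · exact Or.inl h'
    · exact Or.inr (Or.inl h')
  · obtain ⟨n, hn⟩ := Set.mem_iUnion.mp hu
    have h1 : p = -u.1 := (congrArg Prod.fst he).symm
    have h2 : q = -u.2 := (congrArg Prod.snd he).symm
    have hedge : ((-p, -q) ∈ gasketE n ∨ (-q, -p) ∈ gasketE n) := by
      rw [h1, h2, neg_neg, neg_neg]; exact Or.inl hn
    rcases hmainneg n hedge with h' | h'
    · refine Or.inr (Or.inr (Or.inl ?_))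
      have := congrArg Neg.neg h'
      rw [neg_neg] at this
      rw [this, Prod.neg_mk, neg_zero]
    · refine Or.inr (Or.inr (Or.inr ?_))
      have := congrArg Neg.neg h'
      rw [neg_neg] at this
      rw [this, Prod.neg_mk]; rfl
  · obtain ⟨n, hn⟩ := Set.mem_iUnion.mp h
    rcases hmain n (Or.inr hn) with h' | h'
    · exact Or.inl h'
    · exact Or.inr (Or.inl h')
  · obtain ⟨n, hn⟩ := Set.mem_iUnion.mp hu
    have h1 : q = -u.1 := (congrArg Prod.fst he).symm
    have h2 : p = -u.2 := (congrArg Prod.snd he).symm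
    have hedge : ((-p, -q) ∈ gasketE n ∨ (-q, -p) ∈ gasketE n) := by
      rw [h1, h2, neg_neg, neg_neg]; exact Or.inr hn
    rcases hmainneg n hedge with h' | h'
    · refine Or.inr (Or.inr (Or.inl ?_))
      have := congrArg Neg.neg h'
      rw [neg_neg] at this
      rw [this, Prod.neg_mk, neg_zero]
    · refine Or.inr (Or.inr (Or.inr ?_))
      have := congrArg Neg.neg h'
      rw [neg_neg] at this
      rw [this, Prod.neg_mk]; rfl
lemma walk_cross {k : ℕ} : ∀ {x y : SGV} (w : SGGraph.Walk x y),
    x.val ∈ Sset k → y.val ∉ Sset k →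
    ∃ (c : SGV) (w1 : SGGraph.Walk x c) (w2 : SGGraph.Walk c y),
      c.val ∈ C4 k ∧ w.length = w1.length + w2.length ∧ 1 ≤ w2.length := by
  intro x y w
  induction w with
  | nil => intro hx hy; exact absurd hx hy
  | @cons a b z h w ih =>
    intro hx hy
    by_cases hb : b.val ∈ Sset k
    · obtain ⟨c', w1, w2, hc, hlen, h1⟩ := ih hb hy
      refine ⟨c', SimpleGraph.Walk.cons h w1, w2, hc, ?_, h1⟩
      simp only [SimpleGraph.Walk.length_cons]
      omega
    · have hadj : (a.val, b.val) ∈ SGE ∨ (b.val, a.val) ∈ SGE := by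
        have h' := h
        rw [SGGraph, SimpleGraph.fromRel_adj] at h'
        exact h'.2
      have hcC := cut hadj hx hb
      exact ⟨a, SimpleGraph.Walk.nil, SimpleGraph.Walk.cons h w, hcC, by simp, by simp⟩

lemma abs_F_corner {k : ℕ} {c : ℝ × ℝ} (hc : c ∈ C4 k) : |F 1 c| = 2 ^ k := by
  have hpos : (0:ℝ) < 2 ^ k := by positivity
  rcases hc with rfl | rfl | rfl | rfl
  · have : F 1 (((2:ℝ)^k, 0) : ℝ × ℝ) = 2 ^ k := by simp [F]
    rw [this, abs_of_pos hpos]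
  · have : F 1 ((((2:ℝ)^k/2, (2:ℝ)^k/2 * √3)) : ℝ × ℝ) = 2 ^ k := by
      simp only [F]
      linear_combination ((2:ℝ)^k/6) * s3_sq
    rw [this, abs_of_pos hpos]
  · have : F 1 (((-(2:ℝ)^k, 0)) : ℝ × ℝ) = -2 ^ k := by simp [F]
    rw [this, abs_of_neg (by linarith)]
    ring
  · have : F 1 (((-((2:ℝ)^k/2), -((2:ℝ)^k/2 * √3))) : ℝ × ℝ) = -2 ^ k := by
      simp only [F]
      linear_combination (-(2:ℝ)^k/6) * s3_sq
    rw [this, abs_of_neg (by linarith)]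
    ring

lemma dist_lower {k : ℕ} {y : SGV} (hy : y.val ∉ Sset k) :
    2 ^ k + 1 ≤ SGGraph.dist oSG y := by
  obtain ⟨w, hw⟩ := (reachable_o y).exists_walk_length_eq_dist
  have ho : (oSG : ℝ × ℝ) ∈ Sset k := Or.inl (corner0_mem k)
  obtain ⟨c, w1, w2, hc, hlen, h1⟩ := walk_cross w ho hy
  have hε : |(1:ℝ)| ≤ 1 := by norm_num
  have hl := walk_lip hε w1
  have ho0 : F 1 ((oSG : SGV) : ℝ × ℝ) = 0 := by simp [F, oSG]
  have habs : |F 1 ((oSG : SGV) : ℝ × ℝ) - F 1 (c : ℝ × ℝ)| = |F 1 (c : ℝ × ℝ)| := by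
    rw [ho0, zero_sub, abs_neg]
  have key : (2:ℝ)^k ≤ (w1.length : ℝ) := by
    rw [habs, abs_F_corner hc] at hl
    exact hl
  have keyN : 2^k ≤ w1.length := by exact_mod_cast key
  omega

lemma Sset_sub_SGV {k : ℕ} : Sset k ⊆ SGV := by
  rintro p (hp | hp)
  · exact gasketV_subset_SGV hp
  · have : -p ∈ gasketV k := by simpa using hp
    have := neg_mem_SGV (gasketV_subset_SGV this)
    rwa [neg_neg] at this

lemma ball_eq (k : ℕ) :
    {y : SGV | SGGraph.dist oSG y ≤ 2 ^ k} = Subtype.val ⁻¹' Sset k := by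
  ext y
  simp only [Set.mem_setOf_eq, Set.mem_preimage]
  constructor
  · intro hd
    by_contra hy
    have := dist_lower (y := y) hy
    omega
  · rintro (hy | hy)
    · obtain ⟨w, hw⟩ := WB_le_o hy y.2
      exact (SimpleGraph.dist_le w).trans hw
    · have hy' : -(y : ℝ × ℝ) ∈ gasketV k := by simpa using hy
      obtain ⟨w, hw⟩ := WB_le_o_neg hy' y.2
      exact (SimpleGraph.dist_le w).trans hw

lemma ncard_Sset (k : ℕ) : (Sset k).ncard = 3 ^ (k + 1) + 2 := by
  have hA := gasketV_finite k
  have hBeq : -(gasketV k) = Neg.neg '' (gasketV k) := (Set.image_neg_eq_neg).symm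
  have hB : (-(gasketV k)).Finite := by rw [hBeq]; exact hA.image _
  have hcard : (-(gasketV k)).ncard = (gasketV k).ncard := by
    rw [hBeq]; exact Set.ncard_image_of_injective _ neg_injective
  have hinter : gasketV k ∩ -(gasketV k) = {0} := by
    apply Set.Subset.antisymm
    · rintro p ⟨h1, h2⟩
      have h2' : -p ∈ gasketV k := by simpa using h2
      exact pos_neg_inter h1 h2'
    · rintro p rfl
      refine ⟨corner0_mem k, ?_⟩
      simp only [Set.mem_neg, neg_zero]
      exact corner0_mem k
  have e1 : (gasketV k ∪ -(gasketV k)).ncard + (gasketV k ∩ -(gasketV k)).ncard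
      = (gasketV k).ncard + (-(gasketV k)).ncard :=
    Set.ncard_union_add_ncard_inter _ _ hA hB
  rw [hinter, Set.ncard_singleton, hcard] at e1
  have e2 := two_mul_ncard_gasketV k
  show (gasketV k ∪ -(gasketV k)).ncard = 3 ^ (k + 1) + 2
  omega

theorem closed_ball_card' (k : ℕ) :
    Set.ncard {y : SGV | SGGraph.dist oSG y ≤ 2 ^ k} = 3 ^ (k + 1) + 2 := by
  rw [ball_eq k]
  have himg : Subtype.val '' ((Subtype.val ⁻¹' Sset k) : Set SGV) = Sset k := by
    rw [Set.image_preimage_eq_inter_range, Subtype.range_coe]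
    exact Set.inter_eq_self_of_subset_left Sset_sub_SGV
  have h2 := Set.ncard_image_of_injective ((Subtype.val ⁻¹' Sset k) : Set SGV)
    (Subtype.coe_injective)
  rw [himg] at h2
  rw [← h2, ncard_Sset k]
end

/-- On the doubly infinite Sierpinski gasket graph, for `n = 2^k` the closed ball of radius
`n` centered at the origin has cardinality `3^{k+1} + 2`. -/
theorem closed_ball_card (k : ℕ) :
    Set.ncard {y : SGV | SGGraph.dist oSG y ≤ 2 ^ k} = 3 ^ (k + 1) + 2 := closed_ball_card' k

end IDLA
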